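/- Extremal sparsity of integrate-and-fire (discrete case): for every f ∈ ℝ^{N+1} and θ > 0, the spike train s = IF_θ(f) (the β = 1 LIF output) attains the minimal ℓ¹ norm among all sequences s* with entries in θℤ satisfying ‖f - s*‖_A < θ, i.e., ‖IF_θ(f)‖_1 = min{‖s*‖_1 : s* ∈ (θℤ)^{N+1}, ‖f - s*‖_A < θ}. -/

import Mathlib

/-- Truncation quantization toward zero to multiples of `θ`. -/
noncomputable def q (θ z : ℝ) : ℝ := Real.sign z * (θ * (⌊|z| / θ⌋ : ℤ))

/-- Discrete weighted Alexiewicz norm on `ℝ^{N+1}`. -/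
noncomputable def anorm (β : ℝ) (N : ℕ) (f : ℕ → ℝ) : ℝ :=
  Finset.sup' (Finset.range (N + 1)) (by simp)
    (fun n => |∑ k ∈ Finset.range (n + 1), β ^ (n - k) * f k|)

/-- Membrane potential of the discrete LIF recursion with subtraction reset;
the spike output at step `n` is `q θ (lifZ θ β f n)`. -/
noncomputable def lifZ (θ β : ℝ) (f : ℕ → ℝ) : ℕ → ℝ
  | 0 => f 0
  | k + 1 => f (k + 1) + β * (lifZ θ β f k - q θ (lifZ θ β f k))


lemma q_nonneg_eq (θ : ℝ) {z : ℝ} (hz : 0 ≤ z) : q θ z = θ * ⌊z / θ⌋ := by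
  rcases hz.eq_or_lt with h | h
  · simp [q, ← h]
  · rw [q, Real.sign_of_pos h, abs_of_nonneg hz, one_mul]

lemma q_neg (θ z : ℝ) : q θ (-z) = -q θ z := by
  simp only [q, Real.sign_neg, abs_neg]; ring

lemma q_bounds (θ : ℝ) (hθ : 0 < θ) {z : ℝ} (hz : 0 ≤ z) :
    q θ z ≤ z ∧ z - q θ z < θ ∧ 0 ≤ q θ z := by
  rw [q_nonneg_eq θ hz]
  have h1 : (⌊z / θ⌋ : ℝ) ≤ z / θ := Int.floor_le _
  have h2 : z / θ < ⌊z / θ⌋ + 1 := Int.lt_floor_add_one _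
  have h3 : (0:ℝ) ≤ ⌊z / θ⌋ := by
    have : (0:ℝ) ≤ z / θ := div_nonneg hz hθ.le
    exact_mod_cast Int.floor_nonneg.2 this
  constructor
  · calc θ * ⌊z / θ⌋ ≤ θ * (z / θ) := by nlinarith
    _ = z := by field_simp
  refine ⟨?_, by positivity⟩
  have : z = θ * (z / θ) := by field_simp
  nlinarith

lemma key_pos (θ : ℝ) (hθ : 0 < θ) (F : ℝ) (a b : ℤ) (hz : 0 ≤ F - θ * a)
    (ht : |F - θ * b| < θ) :
    |q θ (F - θ * a)| + |θ * a + q θ (F - θ * a) - θ * b| ≤ |θ * b - θ * a| := by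
  obtain ⟨h1, h2, h3⟩ := q_bounds θ hθ hz
  -- q θ (F - θa) = θ * m with m = ⌊(F-θa)/θ⌋ ≥ 0
  rw [q_nonneg_eq θ hz] at h1 h2 h3 ⊢
  set m : ℤ := ⌊(F - θ * a) / θ⌋ with hm
  have hm0 : 0 ≤ m := by
    have : (0:ℝ) ≤ θ * m := h3
    by_contra hc
    push_neg at hc
    have : (m:ℝ) ≤ -1 := by exact_mod_cast Int.le_of_lt_add_one (by omega : m < -1 + 1)
    nlinarith
  -- t := θ b ≥ S := θ(a+m)
  have htb : F - θ < θ * b := by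
    have := abs_lt.1 ht; linarith [this.2]
  have hbS : (a : ℝ) + m ≤ b := by
    by_contra hc
    push_neg at hc
    have hba : b < a + m := by exact_mod_cast hc
    have hb' : (b:ℝ) ≤ (a:ℝ) + m - 1 := by
      have h4 : b ≤ a + m - 1 := by omega
      exact_mod_cast h4
    -- θb ≤ θ(a+m) - θ ≤ F - θ, contradiction
    nlinarith
  have hms : (0:ℝ) ≤ θ * m := h3
  have hbS' : θ * ((a:ℝ) + m) ≤ θ * b := by nlinarith
  rw [abs_of_nonneg hms, abs_of_nonpos (by nlinarith), abs_of_nonneg (by nlinarith)]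
  ring_nf
  nlinarith

lemma key (θ : ℝ) (hθ : 0 < θ) (F : ℝ) (a b : ℤ) (ht : |F - θ * b| < θ) :
    |q θ (F - θ * a)| + |θ * a + q θ (F - θ * a) - θ * b| ≤ |θ * b - θ * a| := by
  rcases le_or_gt 0 (F - θ * a) with h | h
  · exact key_pos θ hθ F a b h ht
  · have h' : (0:ℝ) ≤ -F - θ * (-a : ℤ) := by push_cast; linarith
    have ht' : |-F - θ * (-b : ℤ)| < θ := by
      push_cast; rw [show -F - θ * -(b:ℝ) = -(F - θ * b) by ring, abs_neg]; exact ht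
    have := key_pos θ hθ (-F) (-a) (-b) h' ht'
    push_cast at this
    rw [show -F - θ * -(a:ℝ) = -(F - θ * a) by ring, q_neg] at this
    calc |q θ (F - θ * a)| + |θ * a + q θ (F - θ * a) - θ * b|
        = |-q θ (F - θ * a)| + |θ * -(a:ℝ) + -q θ (F - θ * a) - θ * -(b:ℝ)| := by
          rw [abs_neg, show θ * -(a:ℝ) + -q θ (F - θ * a) - θ * -(b:ℝ)
            = -(θ * a + q θ (F - θ * a) - θ * b) by ring, abs_neg]
      _ ≤ |θ * -(b:ℝ) - θ * -(a:ℝ)| := this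
      _ = |θ * b - θ * a| := by
          rw [show θ * -(b:ℝ) - θ * -(a:ℝ) = -(θ * b - θ * a) by ring, abs_neg]

lemma q_mem (θ z : ℝ) : ∃ m : ℤ, q θ z = θ * m := by
  rcases lt_trichotomy z 0 with h | h | h
  · exact ⟨-⌊|z| / θ⌋, by rw [q, Real.sign_of_neg h]; push_cast; ring⟩
  · exact ⟨0, by simp [q, h]⟩
  · exact ⟨⌊|z| / θ⌋, by rw [q, Real.sign_of_pos h]; ring⟩

lemma q_resid (θ : ℝ) (hθ : 0 < θ) (z : ℝ) : |z - q θ z| < θ := by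
  rcases le_or_gt 0 z with h | h
  · obtain ⟨h1, h2, _⟩ := q_bounds θ hθ h
    rw [abs_of_nonneg (by linarith)]; exact h2
  · obtain ⟨h1, h2, _⟩ := q_bounds θ hθ (neg_nonneg.2 h.le)
    rw [q_neg] at h1 h2
    rw [abs_of_nonpos (by linarith)]; linarith

lemma sum_mult (θ : ℝ) (g : ℕ → ℝ) (n : ℕ) (h : ∀ k < n, ∃ m : ℤ, g k = θ * m) :
    ∃ m : ℤ, ∑ k ∈ Finset.range n, g k = θ * m := by
  induction n with
  | zero => exact ⟨0, by simp⟩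
  | succ n ih =>
    obtain ⟨m, hm⟩ := ih fun k hk => h k (hk.trans (Nat.lt_succ_self n))
    obtain ⟨m', hm'⟩ := h n (Nat.lt_succ_self n)
    exact ⟨m + m', by rw [Finset.sum_range_succ, hm, hm']; push_cast; ring⟩

lemma lifZ_spec (θ : ℝ) (f : ℕ → ℝ) (n : ℕ) :
    lifZ θ 1 f n = (∑ k ∈ Finset.range (n + 1), f k)
      - ∑ k ∈ Finset.range n, q θ (lifZ θ 1 f k) := by
  induction n with
  | zero => simp [lifZ]
  | succ n ih =>
    rw [lifZ, Finset.sum_range_succ f (n+1),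
      Finset.sum_range_succ (fun k => q θ (lifZ θ 1 f k)) n, ih]
    ring

theorem if_extremal_sparsity (θ : ℝ) (hθ : 0 < θ) (N : ℕ) (f : ℕ → ℝ) :
    IsLeast
      {x : ℝ | ∃ s : ℕ → ℝ, (∀ k ≤ N, ∃ m : ℤ, s k = θ * m) ∧
        anorm 1 N (fun k => f k - s k) < θ ∧
        x = ∑ k ∈ Finset.range (N + 1), |s k|}
      (∑ k ∈ Finset.range (N + 1), |q θ (lifZ θ 1 f k)|) := by
  set s : ℕ → ℝ := fun k => q θ (lifZ θ 1 f k) with hs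
  have hFS : ∀ n, (∑ k ∈ Finset.range (n + 1), (f k - s k))
      = lifZ θ 1 f n - q θ (lifZ θ 1 f n) := by
    intro n
    show _ = lifZ θ 1 f n - s n
    rw [Finset.sum_sub_distrib, Finset.sum_range_succ s n, lifZ_spec θ f n]
    ring
  constructor
  · refine ⟨s, fun k _ => q_mem θ _, ?_, rfl⟩
    rw [anorm, Finset.sup'_lt_iff]
    intro n _
    have : (∑ k ∈ Finset.range (n + 1), (1:ℝ) ^ (n - k) * (f k - s k))
        = ∑ k ∈ Finset.range (n + 1), (f k - s k) := by
      apply Finset.sum_congr rfl; intro k _; rw [one_pow, one_mul]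
    rw [this, hFS n]
    exact q_resid θ hθ _
  · rintro x ⟨t, htm, htA, rfl⟩
    -- partial-sum constraint for competitor
    have htA' : ∀ n ≤ N, |(∑ k ∈ Finset.range (n + 1), f k)
        - ∑ k ∈ Finset.range (n + 1), t k| < θ := by
      intro n hn
      have hmem : n ∈ Finset.range (N + 1) := Finset.mem_range.2 (Nat.lt_succ_of_le hn)
      have := (Finset.le_sup' (f := fun n => |∑ k ∈ Finset.range (n + 1),
        (1:ℝ) ^ (n - k) * (f k - t k)|) hmem).trans_lt htA
      have heq : (∑ k ∈ Finset.range (n + 1), (1:ℝ) ^ (n - k) * (f k - t k))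
          = (∑ k ∈ Finset.range (n + 1), f k) - ∑ k ∈ Finset.range (n + 1), t k := by
        rw [← Finset.sum_sub_distrib]
        apply Finset.sum_congr rfl; intro k _; rw [one_pow, one_mul]
      rwa [heq] at this
    -- strengthened induction
    have main : ∀ n, n ≤ N + 1 →
        (∑ k ∈ Finset.range n, |s k|)
          + |(∑ k ∈ Finset.range n, s k) - ∑ k ∈ Finset.range n, t k|
        ≤ ∑ k ∈ Finset.range n, |t k| := by
      intro n
      induction n with
      | zero => simp
      | succ n ih =>
        intro hn
        have hnN : n ≤ N := Nat.lt_succ_iff.1 hn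
        have ih' := ih (Nat.le_of_succ_le hn)
        obtain ⟨a, ha⟩ := sum_mult θ s n fun k _ => q_mem θ _
        obtain ⟨b, hb⟩ := sum_mult θ t (n + 1) fun k hk =>
          htm k (Nat.lt_succ_iff.1 hk |>.trans hnN)
        obtain ⟨b', hb'⟩ := sum_mult θ t n fun k hk =>
          htm k ((Nat.le_of_lt hk).trans hnN)
        have hz : lifZ θ 1 f n = (∑ k ∈ Finset.range (n + 1), f k) - θ * a := by
          rw [lifZ_spec θ f n, ha]
        have hkey := key θ hθ (∑ k ∈ Finset.range (n + 1), f k) a b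
          (by rw [← hb]; exact htA' n hnN)
        rw [← hz] at hkey
        have hsn : s n = q θ (lifZ θ 1 f n) := rfl
        rw [Finset.sum_range_succ (fun k => |s k|), Finset.sum_range_succ (fun k => |t k|),
          Finset.sum_range_succ s, Finset.sum_range_succ t, ha]
        have htri : |θ * b - θ * a| ≤ |θ * b' - θ * a| + |t n| := by
          have : θ * b - θ * a = (θ * b' - θ * a) + (θ * b - θ * b') := by ring
          rw [this]
          refine (abs_add_le _ _).trans ?_
          have : θ * b - θ * b' = t n := by
            rw [← hb, ← hb', Finset.sum_range_succ]; ring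
          rw [this]
        have h2 : |θ * b' - θ * a| = |(∑ k ∈ Finset.range n, s k)
            - ∑ k ∈ Finset.range n, t k| := by
          rw [ha, hb', abs_sub_comm]
        rw [← hsn] at hkey
        have hbsum : (∑ x ∈ Finset.range n, t x) + t n = θ * b := by
          rw [← Finset.sum_range_succ]; exact hb
        rw [hbsum]
        rw [h2] at htri
        linarith [hkey, htri, ih']
    have := main (N + 1) le_rfl
    have habs : (0:ℝ) ≤ |(∑ k ∈ Finset.range (N+1), s k) - ∑ k ∈ Finset.range (N+1), t k| :=
      abs_nonneg _
    linarith
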